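/- Let G be a finite simple graph with at least one edge and maximum degree Δ. Then for every vertex v_i of degree d_i, E_G(v_i) ≥ √(d_i/Δ). -/

import Mathlib

open Matrix Finset

open scoped MatrixOrder

section helpers
variable {n : ℕ}

lemma dot_mulVec_symm {M : Matrix (Fin n) (Fin n) ℝ} (hM : Mᵀ = M) (u v : Fin n → ℝ) :
    u ⬝ᵥ (M *ᵥ v) = (M *ᵥ u) ⬝ᵥ v := by
  rw [dotProduct_mulVec]
  nth_rewrite 1 [← hM]
  rw [vecMul_transpose]

lemma herm_transpose {M : Matrix (Fin n) (Fin n) ℝ} (hM : M.IsHermitian) : Mᵀ = M := by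
  rw [← conjTranspose_eq_transpose_of_trivial]; exact hM

lemma psd_qf_nonneg {M : Matrix (Fin n) (Fin n) ℝ} (hM : M.PosSemidef) (x : Fin n → ℝ) :
    0 ≤ x ⬝ᵥ M *ᵥ x := by
  simpa using hM.dotProduct_mulVec_nonneg x

lemma psd_cs {M : Matrix (Fin n) (Fin n) ℝ} (hM : M.PosSemidef) (x y : Fin n → ℝ) :
    (x ⬝ᵥ M *ᵥ y) ^ 2 ≤ (x ⬝ᵥ M *ᵥ x) * (y ⬝ᵥ M *ᵥ y) := by
  have hR : (CFC.sqrt M).PosSemidef := Matrix.nonneg_iff_posSemidef.mp (CFC.sqrt_nonneg M)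
  have hRR : CFC.sqrt M * CFC.sqrt M = M := CFC.sqrt_mul_sqrt_self M hM.nonneg
  set R := CFC.sqrt M with hRdef
  have hRsym : Rᵀ = R := herm_transpose hR.1
  have key : ∀ u v : Fin n → ℝ, u ⬝ᵥ M *ᵥ v = (R *ᵥ u) ⬝ᵥ (R *ᵥ v) := by
    intro u v
    rw [← hRR, ← Matrix.mulVec_mulVec, dot_mulVec_symm hRsym]
  rw [key x y, key x x, key y y]
  have h := Finset.sum_mul_sq_le_sq_mul_sq Finset.univ (R *ᵥ x) (R *ᵥ y)
  simp only [dotProduct, pow_two] at h ⊢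
  simpa [pow_two] using h

end helpers

section spectral
variable {n : ℕ}

lemma abs_pm_psd {M : Matrix (Fin n) (Fin n) ℝ} (hM : M.IsHermitian) :
    (CFC.sqrt (M * Mᴴ) + M).PosSemidef ∧
    (CFC.sqrt (M * Mᴴ) - M).PosSemidef := by
  set U : Matrix (Fin n) (Fin n) ℝ := (hM.eigenvectorUnitary : Matrix (Fin n) (Fin n) ℝ) with hUdef
  have hUU : Uᴴ * U = 1 := by
    have h2 := hM.eigenvectorUnitary.2
    rw [Matrix.mem_unitaryGroup_iff'] at h2
    simpa [Matrix.star_eq_conjTranspose] using h2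
  set lam := hM.eigenvalues with hlam
  have spec : M = U * Matrix.diagonal lam * Uᴴ := by
    have h := hM.spectral_theorem
    simpa [RCLike.ofReal_real_eq_id, Matrix.star_eq_conjTranspose] using h
  have hmul : ∀ f g : Fin n → ℝ,
      (U * Matrix.diagonal f * Uᴴ) * (U * Matrix.diagonal g * Uᴴ)
        = U * Matrix.diagonal (fun k => f k * g k) * Uᴴ := by
    intro f g
    have h1 : (U * Matrix.diagonal f * Uᴴ) * (U * Matrix.diagonal g * Uᴴ)
        = U * (Matrix.diagonal f * ((Uᴴ * U) * (Matrix.diagonal g * Uᴴ))) := by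
      simp only [Matrix.mul_assoc]
    rw [h1, hUU, Matrix.one_mul, ← Matrix.mul_assoc, ← Matrix.mul_assoc,
      Matrix.mul_assoc U, Matrix.diagonal_mul_diagonal]
  have hpsdconj : ∀ f : Fin n → ℝ, (0 ≤ f) → (U * Matrix.diagonal f * Uᴴ).PosSemidef := by
    intro f hf
    exact (Matrix.PosSemidef.diagonal hf).mul_mul_conjTranspose_same U
  set C := U * Matrix.diagonal (fun k => |lam k|) * Uᴴ with hCdef
  have hCpsd : C.PosSemidef := hpsdconj _ (fun k => abs_nonneg _)
  have hC2 : C ^ 2 = M * Mᴴ := by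
    rw [pow_two, hCdef, hmul, hM.eq]
    rw [spec, hmul]
    have habs : (fun k => |lam k| * |lam k|) = fun k => lam k * lam k :=
      funext fun k => abs_mul_abs_self (lam k)
    rw [habs]
  have hCsqrt : C = CFC.sqrt (M * Mᴴ) :=
    (CFC.sqrt_unique (by rw [← pow_two]; exact hC2) hCpsd.nonneg).symm
  rw [← hCsqrt]
  constructor
  · have h : C + M = U * Matrix.diagonal (fun k => |lam k| + lam k) * Uᴴ := by
      nth_rewrite 1 [spec]
      rw [hCdef, ← Matrix.add_mul, ← Matrix.mul_add, Matrix.diagonal_add]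
    rw [h]
    exact hpsdconj _ (fun k => by simp only [Pi.zero_apply]; linarith [neg_abs_le (lam k)])
  · have h : C - M = U * Matrix.diagonal (fun k => |lam k| - lam k) * Uᴴ := by
      nth_rewrite 1 [spec]
      rw [hCdef, ← Matrix.sub_mul, ← Matrix.mul_sub, Matrix.diagonal_sub]
    rw [h]
    exact hpsdconj _ (fun k => sub_nonneg.mpr (le_abs_self _))

lemma frozen_eq_sqrt {M : Matrix (Fin n) (Fin n) ℝ} (hM : M.PosSemidef) :
    (hM.1.eigenvectorUnitary * diagonal (Real.sqrt ∘ hM.1.eigenvalues) *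
      (star hM.1.eigenvectorUnitary : Matrix (Fin n) (Fin n) ℝ)) = CFC.sqrt M := by
  rw [CFC.sqrt_eq_cfc, cfc_nnreal_eq_real _ M hM.nonneg, hM.1.cfc_eq]
  simp only [IsHermitian.cfc]
  congr 2
  congr 1
  funext k
  simp [Function.comp, Real.coe_sqrt, max_eq_left (hM.eigenvalues_nonneg k)]

end spectral

/-- The energy of the vertex `i` of a finite simple graph `G`:
the `(i,i)` entry of `|A| = (A Aᴴ)^{1/2}`, where `A` is the adjacency matrix. -/
noncomputable def vertexEnergy {n : ℕ} (G : SimpleGraph (Fin n)) [DecidableRel G.Adj]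
    (i : Fin n) : ℝ :=
  ((Matrix.posSemidef_self_mul_conjTranspose (G.adjMatrix ℝ)).1.eigenvectorUnitary *
    diagonal (Real.sqrt ∘ (Matrix.posSemidef_self_mul_conjTranspose (G.adjMatrix ℝ)).1.eigenvalues) *
    (star (Matrix.posSemidef_self_mul_conjTranspose (G.adjMatrix ℝ)).1.eigenvectorUnitary :
      Matrix (Fin n) (Fin n) ℝ)) i i

theorem stmt_6 {n : ℕ} (G : SimpleGraph (Fin n)) [DecidableRel G.Adj]
    (hedge : G.edgeSet.Nonempty) (i : Fin n) :
    Real.sqrt ((G.degree i : ℝ) / (G.maxDegree : ℝ)) ≤ vertexEnergy G i := by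
  classical
  set A := G.adjMatrix ℝ with hAdef
  have hherm : A.IsHermitian := by
    rw [Matrix.IsHermitian, conjTranspose_eq_transpose_of_trivial]
    exact G.transpose_adjMatrix
  set B := CFC.sqrt (A * Aᴴ) with hBdef
  have hBpsd : B.PosSemidef := Matrix.nonneg_iff_posSemidef.mp (CFC.sqrt_nonneg _)
  have hBsym : Bᵀ = B := herm_transpose hBpsd.1
  have hAsym : Aᵀ = A := G.transpose_adjMatrix
  have hBB : B * B = A * A := by
    rw [hBdef, CFC.sqrt_mul_sqrt_self _ (Matrix.posSemidef_self_mul_conjTranspose A).nonneg, hherm.eq]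
  obtain ⟨hP, hQ⟩ := abs_pm_psd hherm
  -- notation
  set d : ℝ := (G.degree i : ℝ) with hd
  set D : ℝ := (G.maxDegree : ℝ) with hD
  set x : Fin n → ℝ := fun j => if G.Adj i j then 1 else 0 with hx
  set e : Fin n → ℝ := Pi.single i 1 with he
  have hx_nonneg : ∀ j, 0 ≤ x j := fun j => by rw [hx]; positivity
  have hdeg_card : ∀ v : Fin n, (G.degree v : ℝ) = ((Finset.univ.filter (G.Adj v)).card : ℝ) := by
    intro v
    rw [← SimpleGraph.card_neighborFinset_eq_degree, SimpleGraph.neighborFinset_eq_filter]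
  have hsum_x : ∑ j, x j = d := by
    rw [hx, hd, Finset.sum_boole, hdeg_card]
  have hxx : x ⬝ᵥ x = d := by
    rw [← hsum_x, dotProduct]
    apply Finset.sum_congr rfl
    intro j _
    rw [hx]
    by_cases h : G.Adj i j <;> simp [h]
  -- the vector c = A *ᵥ x
  set c := A *ᵥ x with hc
  have hc_apply : ∀ l, c l = ∑ j ∈ G.neighborFinset l, x j := by
    intro l
    rw [hc, hAdef]
    exact G.adjMatrix_mulVec_apply l x
  have hc_nonneg : ∀ l, 0 ≤ c l := by
    intro l
    rw [hc_apply]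
    exact Finset.sum_nonneg fun j _ => hx_nonneg j
  have hc_le : ∀ l, c l ≤ d := by
    intro l
    rw [hc_apply, ← hsum_x]
    exact Finset.sum_le_sum_of_subset_of_nonneg (Finset.subset_univ _)
      (fun j _ _ => hx_nonneg j)
  have hsum_c : ∑ l, c l ≤ d * D := by
    have h1 : ∑ l, c l = ∑ j, x j * (G.degree j : ℝ) := by
      simp only [hc_apply]
      rw [Finset.sum_comm' (t' := Finset.univ) (s' := fun j => G.neighborFinset j)]
      · apply Finset.sum_congr rfl
        intro j _
        rw [Finset.sum_const, hdeg_card, SimpleGraph.neighborFinset_eq_filter]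
        simp [mul_comm]
      · intro a b
        simp [SimpleGraph.mem_neighborFinset, SimpleGraph.adj_comm]
    rw [h1, ← hsum_x, Finset.sum_mul]
    apply Finset.sum_le_sum
    intro j _
    have hdeg : (G.degree j : ℝ) ≤ D := by
      rw [hD]
      exact_mod_cast G.degree_le_maxDegree j
    exact mul_le_mul_of_nonneg_left hdeg (hx_nonneg j)
  have hcc : c ⬝ᵥ c ≤ d * (d * D) := by
    calc c ⬝ᵥ c = ∑ l, c l * c l := rfl
      _ ≤ ∑ l, d * c l := Finset.sum_le_sum fun l _ =>
          mul_le_mul_of_nonneg_right (hc_le l) (hc_nonneg l)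
      _ = d * ∑ l, c l := by rw [Finset.mul_sum]
      _ ≤ d * (d * D) := by
          apply mul_le_mul_of_nonneg_left hsum_c
          rw [hd]; positivity
  -- x ⬝ᵥ B*B x = c ⬝ᵥ c
  have hxB2x : x ⬝ᵥ (B *ᵥ (B *ᵥ x)) = c ⬝ᵥ c := by
    rw [Matrix.mulVec_mulVec, hBB, ← Matrix.mulVec_mulVec, dot_mulVec_symm hAsym, hc]
  -- s := x ⬝ᵥ B x
  set s := x ⬝ᵥ B *ᵥ x with hs
  have hs_nonneg : 0 ≤ s := psd_qf_nonneg hBpsd x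
  have hs_sq : s ^ 2 ≤ d * (d * (d * D)) := by
    have hCS := Finset.sum_mul_sq_le_sq_mul_sq Finset.univ x (B *ᵥ x)
    have h1 : (∑ j, x j * (B *ᵥ x) j) = s := rfl
    have h2 : (∑ j, x j ^ 2) = d := by
      rw [← hxx]; apply Finset.sum_congr rfl; intro j _; rw [pow_two]
    have h3 : (∑ j, (B *ᵥ x) j ^ 2) = c ⬝ᵥ c := by
      rw [← hxB2x, dot_mulVec_symm hBsym]
      apply Finset.sum_congr rfl; intro j _; rw [pow_two]
    rw [h1, h2, h3] at hCS
    calc s ^ 2 ≤ d * (c ⬝ᵥ c) := hCS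
      _ ≤ d * (d * (d * D)) := by
          apply mul_le_mul_of_nonneg_left hcc
          rw [hd]; positivity
  -- b := B i i
  have hb_eq : vertexEnergy G i = B i i := by
    unfold vertexEnergy; rw [frozen_eq_sqrt (Matrix.posSemidef_self_mul_conjTranspose _)]
  set b := B i i with hb
  have hdiag : ∀ M : Matrix (Fin n) (Fin n) ℝ, e ⬝ᵥ M *ᵥ e = M i i := by
    intro M
    rw [he]
    simp [single_dotProduct, Matrix.mulVec_single]
  have hb_nonneg : 0 ≤ b := by
    have := psd_qf_nonneg hBpsd e
    rwa [hdiag B] at this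
  have hAii : A i i = 0 := by simp [hAdef]
  -- key inequality  d^2 ≤ b * s
  have hkey : d ^ 2 ≤ b * s := by
    set u := e ⬝ᵥ (B + A) *ᵥ x with hu
    set v := e ⬝ᵥ (B - A) *ᵥ x with hv
    have hu2 : u ^ 2 ≤ b * (x ⬝ᵥ (B + A) *ᵥ x) := by
      have := psd_cs hP e x
      rwa [hdiag (B + A), Matrix.add_apply, hAii, add_zero] at this
    have hv2 : v ^ 2 ≤ b * (x ⬝ᵥ (B - A) *ᵥ x) := by
      have := psd_cs hQ e x
      rwa [hdiag (B - A), Matrix.sub_apply, hAii, sub_zero] at this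
    have hp_nonneg : 0 ≤ x ⬝ᵥ (B + A) *ᵥ x := psd_qf_nonneg hP x
    have hq_nonneg : 0 ≤ x ⬝ᵥ (B - A) *ᵥ x := psd_qf_nonneg hQ x
    have heAx : e ⬝ᵥ A *ᵥ x = d := by
      rw [he]
      rw [single_dotProduct, one_mul, ← hc, hc_apply]
      rw [← hsum_x]
      rw [show ∑ j, x j = ∑ j ∈ G.neighborFinset i, x j + ∑ j ∈ (G.neighborFinset i)ᶜ, x j from
        (Finset.sum_add_sum_compl _ _).symm]
      have : ∑ j ∈ (G.neighborFinset i)ᶜ, x j = 0 := by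
        apply Finset.sum_eq_zero
        intro j hj
        rw [Finset.mem_compl, SimpleGraph.mem_neighborFinset] at hj
        rw [hx]; simp [hj]
      rw [this, add_zero]
    have huv : u - v = 2 * d := by
      rw [hu, hv, Matrix.add_mulVec, Matrix.sub_mulVec, dotProduct_add,
        dotProduct_sub, heAx]
      ring
    have hpq : (x ⬝ᵥ (B + A) *ᵥ x) + (x ⬝ᵥ (B - A) *ᵥ x) = 2 * s := by
      rw [hs, Matrix.add_mulVec, Matrix.sub_mulVec, dotProduct_add,
        dotProduct_sub]
      ring
    nlinarith [sq_nonneg (u + v), sq_nonneg (u - v), hu2, hv2, hpq, huv]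
  -- conclude
  rw [hb_eq]
  by_cases hdeg0 : G.degree i = 0
  · rw [hd] at *
    rw [hdeg0]
    simp [hb_nonneg]
  · have hd1 : (1 : ℝ) ≤ d := by
      rw [hd]
      exact_mod_cast Nat.one_le_iff_ne_zero.mpr hdeg0
    have hDd : d ≤ D := by
      rw [hd, hD]
      exact_mod_cast G.degree_le_maxDegree i
    have hD0 : 0 < D := lt_of_lt_of_le (by linarith) hDd
    have hfinal : d / D ≤ b ^ 2 := by
      rw [div_le_iff₀ hD0]
      have hd3 : (1:ℝ) ≤ d ^ 3 := one_le_pow₀ hd1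
      nlinarith [mul_self_le_mul_self (by positivity : (0:ℝ) ≤ d ^ 2) hkey,
        mul_le_mul_of_nonneg_left hs_sq (mul_nonneg hb_nonneg hb_nonneg), hd3, hd1, hb_nonneg,
        hs_nonneg, hD0]
    calc Real.sqrt (d / D) ≤ Real.sqrt (b ^ 2) := Real.sqrt_le_sqrt hfinal
      _ = b := by rw [Real.sqrt_sq hb_nonneg]
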